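/- Let a, b ∈ ℝ and let R be the 2×2 matrix [[1, b], [a, 1]] with det(R) = 1 − ab > 0, and let θ ∈ ℝ² satisfy R⁻¹θ ≤ 0 componentwise. Then every fluid path (y, z) associated with (θ, R) that starts from z(0) = 0 remains at 0; that is, z(t) = 0 for all t ≥ 0. -/

import Mathlib

open Matrix Set

/-- `(y, z)` is a fluid path associated with the data `(θ, R)` in dimension `d`:
`z(t) = z(0) + θ t + R y(t)`, `z(t)` lies in the nonnegative orthant, `y` is
componentwise nondecreasing with `y(0) = 0`, and each `y_j` is constant on every
closed interval on which `z_j` stays strictly positive. (All conditions are imposed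
for times `t ≥ 0`.) -/
def IsFluidPath {d : ℕ} (θ : Fin d → ℝ) (R : Matrix (Fin d) (Fin d) ℝ)
    (y z : ℝ → Fin d → ℝ) : Prop :=
  ContinuousOn y (Ici 0) ∧ ContinuousOn z (Ici 0) ∧
  (∀ t : ℝ, 0 ≤ t → z t = fun j => z 0 j + θ j * t + R.mulVec (y t) j) ∧
  (∀ t : ℝ, 0 ≤ t → ∀ j, 0 ≤ z t j) ∧
  y 0 = 0 ∧
  (∀ s t : ℝ, 0 ≤ s → s ≤ t → ∀ j, y s j ≤ y t j) ∧
  (∀ j : Fin d, ∀ s t : ℝ, 0 ≤ s → s ≤ t →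
    (∀ r ∈ Icc s t, 0 < z r j) → y s j = y t j)

set_option maxHeartbeats 2000000 in
theorem stmt9 (a b : ℝ) (R : Matrix (Fin 2) (Fin 2) ℝ)
    (hRdef : R = !![1, b; a, 1]) (hdet : 0 < 1 - a * b)
    (θ : Fin 2 → ℝ) (hθ : ∀ i, R⁻¹.mulVec θ i ≤ 0)
    (y z : ℝ → Fin 2 → ℝ) (hfluid : IsFluidPath θ R y z)
    (hz0 : z 0 = 0) :
    ∀ t : ℝ, 0 ≤ t → z t = 0 := by
  obtain ⟨hyc, hzc, hzeq, hznn, hy0, hymono, hyconst⟩ := hfluid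
  have hD : (1 - a*b) ≠ 0 := by linarith
  -- θ componentwise inequalities
  have hRinv : R⁻¹ = (1 - a*b)⁻¹ • !![1, -b; -a, 1] := by
    apply Matrix.inv_eq_right_inv
    rw [hRdef]
    ext i j
    fin_cases i <;> fin_cases j <;>
      simp [Matrix.mul_apply, Fin.sum_univ_two, Matrix.smul_apply] <;> field_simp <;> ring
  have hinv : (0:ℝ) < (1 - a*b)⁻¹ := inv_pos.mpr hdet
  have hθ0 : θ 0 ≤ b * θ 1 := by
    have h0 := hθ 0
    rw [hRinv] at h0
    simp [Matrix.mulVec, dotProduct, Fin.sum_univ_two] at h0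
    nlinarith [mul_pos hinv hdet]
  have hθ1 : θ 1 ≤ a * θ 0 := by
    have h1 := hθ 1
    rw [hRinv] at h1
    simp [Matrix.mulVec, dotProduct, Fin.sum_univ_two] at h1
    nlinarith [mul_pos hinv hdet]
  -- drift decomposition
  set c0 : ℝ := (b * θ 1 - θ 0) / (1 - a*b) with hc0def
  set c1 : ℝ := (a * θ 0 - θ 1) / (1 - a*b) with hc1def
  have hc0 : 0 ≤ c0 := div_nonneg (by linarith) (by linarith)
  have hc1 : 0 ≤ c1 := div_nonneg (by linarith) (by linarith)
  have hθ0' : θ 0 = -(c0 + b * c1) := by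
    rw [hc0def, hc1def]; linear_combination (-θ 0) * mul_inv_cancel₀ hD
  have hθ1' : θ 1 = -(a * c0 + c1) := by
    rw [hc0def, hc1def]; field_simp; ring
  -- shifted regulator processes
  set u0 : ℝ → ℝ := fun t => y t 0 - c0 * t with hu0def
  set u1 : ℝ → ℝ := fun t => y t 1 - c1 * t with hu1def
  have hz0e : ∀ t : ℝ, 0 ≤ t → z t 0 = u0 t + b * u1 t := by
    intro t ht
    have h0 := congrFun (hzeq t ht) 0
    rw [hz0] at h0
    simp only [hRdef, Matrix.mulVec, dotProduct, Fin.sum_univ_two] at h0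
    simp [vecHead, vecTail] at h0
    rw [h0, hu0def, hu1def, hθ0']
    ring
  have hz1e : ∀ t : ℝ, 0 ≤ t → z t 1 = a * u0 t + u1 t := by
    intro t ht
    have h1 := congrFun (hzeq t ht) 1
    rw [hz0] at h1
    simp only [hRdef, Matrix.mulVec, dotProduct, Fin.sum_univ_two] at h1
    simp [vecHead, vecTail] at h1
    rw [h1, hu0def, hu1def, hθ1']
    ring
  -- weights
  set w0 : ℝ := 1 + max (-a) 0 with hw0def
  set w1 : ℝ := 1 + max (-b) 0 with hw1def
  have hw0 : 0 < w0 := by rw [hw0def]; have := le_max_right (-a) (0:ℝ); linarith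
  have hw1 : 0 < w1 := by rw [hw1def]; have := le_max_right (-b) (0:ℝ); linarith
  -- key reflection lemmas
  have lemA : ∀ t : ℝ, 0 ≤ t → 0 < u0 t → w1 * u1 t ≤ w0 * u0 t → 0 < z t 0 := by
    intro t ht hu hcmp
    have hz1nn : 0 ≤ a * u0 t + u1 t := by rw [← hz1e t ht]; exact hznn t ht 1
    rw [hz0e t ht]
    rcases le_or_gt 0 b with hb | hb
    · nlinarith [mul_nonneg hb hz1nn, mul_pos hdet hu]
    · have hmb : max (-b) 0 = -b := max_eq_left (by linarith)
      rcases le_or_gt 0 a with ha | ha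
      · have hma : max (-a) 0 = 0 := max_eq_right (by linarith)
        rw [hw0def, hw1def, hma, hmb] at hcmp
        nlinarith [mul_le_mul_of_nonneg_left hcmp (by linarith : (0:ℝ) ≤ -b), hu]
      · have hma : max (-a) 0 = -a := max_eq_left (by linarith)
        rw [hw0def, hw1def, hma, hmb] at hcmp
        nlinarith [mul_le_mul_of_nonneg_left hcmp (by linarith : (0:ℝ) ≤ -b),
          mul_pos hdet hu, hu]
  have lemB : ∀ t : ℝ, 0 ≤ t → 0 < u1 t → w0 * u0 t ≤ w1 * u1 t → 0 < z t 1 := by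
    intro t ht hu hcmp
    have hz0nn : 0 ≤ u0 t + b * u1 t := by rw [← hz0e t ht]; exact hznn t ht 0
    rw [hz1e t ht]
    rcases le_or_gt 0 a with ha | ha
    · nlinarith [mul_nonneg ha hz0nn, mul_pos hdet hu]
    · have hma : max (-a) 0 = -a := max_eq_left (by linarith)
      rcases le_or_gt 0 b with hb | hb
      · have hmb : max (-b) 0 = 0 := max_eq_right (by linarith)
        rw [hw0def, hw1def, hma, hmb] at hcmp
        nlinarith [mul_le_mul_of_nonneg_left hcmp (by linarith : (0:ℝ) ≤ -a), hu]
      · have hmb : max (-b) 0 = -b := max_eq_left (by linarith)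
        rw [hw0def, hw1def, hma, hmb] at hcmp
        nlinarith [mul_le_mul_of_nonneg_left hcmp (by linarith : (0:ℝ) ≤ -a),
          mul_pos hdet hu, hu]
  -- continuity
  have hy0c : ContinuousOn (fun t => y t 0) (Ici 0) :=
    (continuous_apply (0 : Fin 2)).comp_continuousOn hyc
  have hy1c : ContinuousOn (fun t => y t 1) (Ici 0) :=
    (continuous_apply (1 : Fin 2)).comp_continuousOn hyc
  have hu0c : ContinuousOn u0 (Ici 0) := by
    rw [hu0def]; exact hy0c.sub ((continuous_const.mul continuous_id).continuousOn)
  have hu1c : ContinuousOn u1 (Ici 0) := by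
    rw [hu1def]; exact hy1c.sub ((continuous_const.mul continuous_id).continuousOn)
  have hz0c : ContinuousOn (fun t => z t 0) (Ici 0) :=
    (continuous_apply (0 : Fin 2)).comp_continuousOn hzc
  have hz1c : ContinuousOn (fun t => z t 1) (Ici 0) :=
    (continuous_apply (1 : Fin 2)).comp_continuousOn hzc
  have hcpt : ∀ (f : ℝ → ℝ), ContinuousOn f (Ici 0) → ∀ m : ℝ, 0 ≤ m → ∀ ε : ℝ, 0 < ε →
      ∃ δ > 0, ∀ r : ℝ, 0 ≤ r → |r - m| < δ → |f r - f m| < ε := by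
    intro f hf m hm ε hε
    obtain ⟨δ, hδ, h⟩ := Metric.continuousWithinAt_iff.mp (hf m hm) ε hε
    refine ⟨δ, hδ, fun r hr hrm => ?_⟩
    have := h (mem_Ici.mpr hr) (by rwa [Real.dist_eq])
    rwa [Real.dist_eq] at this
  -- Lyapunov function
  set V : ℝ → ℝ := fun t => max (w0 * u0 t) (w1 * u1 t) with hVdef
  have hVc : ContinuousOn V (Ici 0) :=
    (continuousOn_const.mul hu0c).sup' (continuousOn_const.mul hu1c)
  have hu00 : u0 0 = 0 := by rw [hu0def]; simp [hy0]
  have hu10 : u1 0 = 0 := by rw [hu1def]; simp [hy0]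
  have hV0 : V 0 = 0 := by rw [hVdef]; simp [hu00, hu10]
  -- main claim: V ≤ 0 on [0, ∞)
  have key : ∀ t : ℝ, 0 ≤ t → V t ≤ 0 := by
    by_contra hcon
    push_neg at hcon
    obtain ⟨t₀, ht₀, hVt₀⟩ := hcon
    -- find intermediate point s with V s = V t₀ / 2
    have hIcc : Icc (0:ℝ) t₀ ⊆ Ici (0:ℝ) := Icc_subset_Ici_self
    have hIVT := intermediate_value_Icc ht₀ (hVc.mono hIcc)
    have hmem : V t₀ / 2 ∈ Icc (V 0) (V t₀) := by
      rw [hV0]; constructor <;> linarith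
    obtain ⟨s, hs, hVs⟩ := hIVT hmem
    have hs0 : 0 ≤ s := hs.1
    have hst : s ≤ t₀ := hs.2
    have hVspos : 0 < V s := by rw [hVs]; linarith
    -- the set C
    set C : Set ℝ := Icc s t₀ ∩ V ⁻¹' (Iic (V s)) with hCdef
    have hCne : C.Nonempty := ⟨s, ⟨le_refl s, hst⟩, by simp⟩
    have hCbdd : BddAbove C := BddAbove.mono (inter_subset_left) (bddAbove_Icc)
    have hCclosed : IsClosed C := by
      apply ContinuousOn.preimage_isClosed_of_isClosed (hVc.mono ?_) isClosed_Icc isClosed_Iic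
      exact fun x hx => le_trans hs0 hx.1
    set m : ℝ := sSup C with hmdef
    have hmC : m ∈ C := hCclosed.csSup_mem hCne hCbdd
    obtain ⟨⟨hms, hmt⟩, hVm⟩ := hmC
    have hm0 : 0 ≤ m := le_trans hs0 hms
    have hVmle : V m ≤ V s := hVm
    have hmeq : m = t₀ := by
      by_contra hne
      have hmlt : m < t₀ := lt_of_le_of_ne hmt hne
      -- per-coordinate claim
      have claim0 : ∃ δ > 0, ∀ r ∈ Icc m (min (m + δ) t₀), w0 * u0 r ≤ V s := by
        rcases lt_or_eq_of_le (le_trans (le_max_left (w0 * u0 m) (w1 * u1 m)) hVmle)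
          with hlt | heq
        · obtain ⟨δ, hδ, h⟩ := hcpt u0 hu0c m hm0 ((V s - w0 * u0 m) / w0)
            (div_pos (by linarith) hw0)
          refine ⟨δ/2, by linarith, fun r hr => ?_⟩
          have hr0 : 0 ≤ r := le_trans hm0 hr.1
          have hrd : |r - m| < δ := by
            rw [abs_of_nonneg (by linarith [hr.1])]
            have := le_trans hr.2 (min_le_left _ _); linarith
          have := h r hr0 hrd
          have := abs_lt.mp this
          have h4 : u0 r < u0 m + (V s - w0 * u0 m) / w0 := by linarith [this.2]
          have h5 : w0 * u0 r < w0 * (u0 m + (V s - w0 * u0 m) / w0) :=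
            mul_lt_mul_of_pos_left h4 hw0
          have h6 : w0 * (u0 m + (V s - w0 * u0 m) / w0) = V s := by field_simp; ring
          exact (h5.trans_eq h6).le
        · -- max attained at coordinate 0
          have hu0pos : 0 < u0 m := by
            have : 0 < w0 * u0 m := by rw [heq]; exact hVspos
            nlinarith [hw0]
          have hcmp : w1 * u1 m ≤ w0 * u0 m := by
            have : w1 * u1 m ≤ V m := le_max_right _ _
            rw [heq]; exact le_trans this hVmle
          have hzpos := lemA m hm0 hu0pos hcmp
          obtain ⟨δ, hδ, h⟩ := hcpt (fun t => z t 0) hz0c m hm0 (z m 0) hzpos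
          refine ⟨δ/2, by linarith, fun r hr => ?_⟩
          have hr0 : 0 ≤ r := le_trans hm0 hr.1
          have hyconst' : y m 0 = y r 0 := by
            apply hyconst 0 m r hm0 hr.1
            intro q hq
            have hq0 : 0 ≤ q := le_trans hm0 hq.1
            have hqd : |q - m| < δ := by
              rw [abs_of_nonneg (by linarith [hq.1])]
              have h1 := le_trans hq.2 hr.2
              have h2 := le_trans h1 (min_le_left _ _)
              linarith
            have := abs_lt.mp (h q hq0 hqd)
            linarith [this.1]
          have hu0le : u0 r ≤ u0 m := by
            rw [hu0def]
            simp only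
            rw [← hyconst']
            have : c0 * m ≤ c0 * r := mul_le_mul_of_nonneg_left hr.1 hc0
            linarith
          rw [← heq]
          exact mul_le_mul_of_nonneg_left hu0le hw0.le
      have claim1 : ∃ δ > 0, ∀ r ∈ Icc m (min (m + δ) t₀), w1 * u1 r ≤ V s := by
        rcases lt_or_eq_of_le (le_trans (le_max_right (w0 * u0 m) (w1 * u1 m)) hVmle)
          with hlt | heq
        · obtain ⟨δ, hδ, h⟩ := hcpt u1 hu1c m hm0 ((V s - w1 * u1 m) / w1)
            (div_pos (by linarith) hw1)
          refine ⟨δ/2, by linarith, fun r hr => ?_⟩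
          have hr0 : 0 ≤ r := le_trans hm0 hr.1
          have hrd : |r - m| < δ := by
            rw [abs_of_nonneg (by linarith [hr.1])]
            have := le_trans hr.2 (min_le_left _ _); linarith
          have := h r hr0 hrd
          have := abs_lt.mp this
          have h4 : u1 r < u1 m + (V s - w1 * u1 m) / w1 := by linarith [this.2]
          have h5 : w1 * u1 r < w1 * (u1 m + (V s - w1 * u1 m) / w1) :=
            mul_lt_mul_of_pos_left h4 hw1
          have h6 : w1 * (u1 m + (V s - w1 * u1 m) / w1) = V s := by field_simp; ring
          exact (h5.trans_eq h6).le
        · have hu1pos : 0 < u1 m := by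
            have : 0 < w1 * u1 m := by rw [heq]; exact hVspos
            nlinarith [hw1]
          have hcmp : w0 * u0 m ≤ w1 * u1 m := by
            have : w0 * u0 m ≤ V m := le_max_left _ _
            rw [heq]; exact le_trans this hVmle
          have hzpos := lemB m hm0 hu1pos hcmp
          obtain ⟨δ, hδ, h⟩ := hcpt (fun t => z t 1) hz1c m hm0 (z m 1) hzpos
          refine ⟨δ/2, by linarith, fun r hr => ?_⟩
          have hr0 : 0 ≤ r := le_trans hm0 hr.1
          have hyconst' : y m 1 = y r 1 := by
            apply hyconst 1 m r hm0 hr.1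
            intro q hq
            have hq0 : 0 ≤ q := le_trans hm0 hq.1
            have hqd : |q - m| < δ := by
              rw [abs_of_nonneg (by linarith [hq.1])]
              have h1 := le_trans hq.2 hr.2
              have h2 := le_trans h1 (min_le_left _ _)
              linarith
            have := abs_lt.mp (h q hq0 hqd)
            linarith [this.1]
          have hu1le : u1 r ≤ u1 m := by
            rw [hu1def]
            simp only
            rw [← hyconst']
            have : c1 * m ≤ c1 * r := mul_le_mul_of_nonneg_left hr.1 hc1
            linarith
          rw [← heq]
          exact mul_le_mul_of_nonneg_left hu1le hw1.le
      obtain ⟨δ0, hδ0, h0⟩ := claim0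
      obtain ⟨δ1, hδ1, h1⟩ := claim1
      set t' : ℝ := min (m + min δ0 δ1) t₀ with ht'def
      have hmt' : m < t' := lt_min (by linarith [lt_min_iff.mpr ⟨hδ0, hδ1⟩]) hmlt
      have ht'le : t' ≤ t₀ := min_le_right _ _
      have ht'0 : t' ∈ Icc m (min (m + δ0) t₀) :=
        ⟨hmt'.le, le_min (le_trans (min_le_left _ _) (by linarith [min_le_left δ0 δ1])) ht'le⟩
      have ht'1 : t' ∈ Icc m (min (m + δ1) t₀) :=
        ⟨hmt'.le, le_min (le_trans (min_le_left _ _) (by linarith [min_le_right δ0 δ1])) ht'le⟩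
      have ht'C : t' ∈ C := by
        refine ⟨⟨le_trans hms hmt'.le, ht'le⟩, ?_⟩
        simp only [mem_preimage, mem_Iic, hVdef]
        exact max_le (h0 t' ht'0) (h1 t' ht'1)
      have := le_csSup hCbdd ht'C
      rw [← hmdef] at this
      linarith
    rw [hmeq] at hVmle
    rw [hVs] at hVmle
    linarith
  -- conclude: u0, u1 ≤ 0, hence both zero, hence z = 0
  intro t ht
  have hu0le : u0 t ≤ 0 := by
    have := le_trans (le_max_left (w0 * u0 t) (w1 * u1 t)) (key t ht)
    nlinarith [hw0]
  have hu1le : u1 t ≤ 0 := by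
    have := le_trans (le_max_right (w0 * u0 t) (w1 * u1 t)) (key t ht)
    nlinarith [hw1]
  have hz0nn : 0 ≤ u0 t + b * u1 t := by rw [← hz0e t ht]; exact hznn t ht 0
  have hz1nn : 0 ≤ a * u0 t + u1 t := by rw [← hz1e t ht]; exact hznn t ht 1
  have k1 : u0 t ^ 2 ≤ -b * (u0 t * u1 t) := by nlinarith [mul_nonpos_of_nonpos_of_nonneg hu0le hz0nn]
  have k2 : u1 t ^ 2 ≤ -a * (u0 t * u1 t) := by nlinarith [mul_nonpos_of_nonpos_of_nonneg hu1le hz1nn]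
  have k3 : u0 t ^ 2 * u1 t ^ 2 ≤ (a * b) * (u0 t * u1 t) ^ 2 := by
    have := mul_le_mul k1 k2 (sq_nonneg (u1 t)) (le_trans (sq_nonneg (u0 t)) k1)
    nlinarith [this]
  have hp : u0 t * u1 t = 0 := by nlinarith [sq_nonneg (u0 t * u1 t)]
  rw [hp] at k1 k2
  have hu0z : u0 t = 0 := by nlinarith [sq_nonneg (u0 t)]
  have hu1z : u1 t = 0 := by nlinarith [sq_nonneg (u1 t)]
  funext j
  fin_cases j
  · show z t 0 = 0
    rw [hz0e t ht, hu0z, hu1z]; ring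
  · show z t 1 = 0
    rw [hz1e t ht, hu0z, hu1z]; ring
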